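/- Let γ ∈ ℝ and suppose y : [0,∞) → ℝ^d is continuous and of bounded variation, and Ȳ : [0,∞) → ℝ^d is continuous. If Y(t) = e^{-γt} Y(0) + ∫₀ᵗ e^{-γ(t-s)} dy(s) + γ ∫₀ᵗ e^{-γ(t-s)} Ȳ(s) ds, then Y satisfies Y(t) = Y(0) + y(t) − y(0) + γ ∫₀ᵗ (Ȳ(s) − Y(s)) ds for all t ≥ 0. -/

import Mathlib

open MeasureTheory Filter Topology intervalIntegral

/-- If Y(t) = e^{-γt} Y(0) + ∫₀ᵗ e^{-γ(t-s)} dy(s) + γ∫₀ᵗ e^{-γ(t-s)} Ȳ(s) ds,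
with y a continuously differentiable (bounded variation) path so that the Riemann–Stieltjes
integral is ∫₀ᵗ e^{-γ(t-s)} y'(s) ds, then Y(t) = Y(0) + y(t) − y(0) + γ∫₀ᵗ (Ȳ(s) − Y(s)) ds. -/
theorem stmt_6 (d : ℕ) (γ : ℝ) (y y' Ybar Y : ℝ → EuclideanSpace ℝ (Fin d))
    (hy : ∀ s, HasDerivAt y (y' s) s) (hy' : Continuous y') (hYbar : Continuous Ybar)
    (hY : ∀ t, Y t = Real.exp (-γ * t) • Y 0
        + (∫ s in (0:ℝ)..t, Real.exp (-γ * (t - s)) • y' s)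
        + γ • ∫ s in (0:ℝ)..t, Real.exp (-γ * (t - s)) • Ybar s) :
    ∀ t ≥ (0:ℝ), Y t = Y 0 + y t - y 0 + γ • ∫ s in (0:ℝ)..t, (Ybar s - Y s) := by
  set g : ℝ → EuclideanSpace ℝ (Fin d) := fun s => y' s + γ • Ybar s with hg
  have hgcont : Continuous g := hy'.add (hYbar.const_smul γ)
  have hegcont : Continuous (fun s => Real.exp (γ * s) • g s) := by fun_prop
  have hc1 : Continuous fun s : ℝ => Real.exp (γ * s) • y' s := by fun_prop
  have hc2 : Continuous fun s : ℝ => Real.exp (γ * s) • γ • Ybar s := by fun_prop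
  set W : ℝ → EuclideanSpace ℝ (Fin d) :=
    fun t => Y 0 + ∫ s in (0:ℝ)..t, Real.exp (γ * s) • g s with hWdef
  -- pull out exp(-γ t) from the integrals
  have key : ∀ (f : ℝ → EuclideanSpace ℝ (Fin d)) (t : ℝ),
      (∫ s in (0:ℝ)..t, Real.exp (-γ * (t - s)) • f s)
        = Real.exp (-γ * t) • ∫ s in (0:ℝ)..t, Real.exp (γ * s) • f s := by
    intro f t
    rw [← intervalIntegral.integral_smul]
    apply intervalIntegral.integral_congr
    intro s _
    simp only [smul_smul, ← Real.exp_add]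
    ring_nf
  have hYW : ∀ t, Y t = Real.exp (-γ * t) • W t := by
    intro t
    rw [hY t, hWdef]
    simp only [hg]
    have hsplit : (∫ s in (0:ℝ)..t, Real.exp (γ * s) • (y' s + γ • Ybar s))
        = (∫ s in (0:ℝ)..t, Real.exp (γ * s) • y' s)
          + ∫ s in (0:ℝ)..t, Real.exp (γ * s) • γ • Ybar s := by
      rw [← intervalIntegral.integral_add (hc1.intervalIntegrable 0 t)
          (hc2.intervalIntegrable 0 t)]
      apply intervalIntegral.integral_congr
      intro s _
      simp [smul_add]
    rw [hsplit, key y' t, key Ybar t]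
    have : (∫ s in (0:ℝ)..t, Real.exp (γ * s) • γ • Ybar s)
        = γ • ∫ s in (0:ℝ)..t, Real.exp (γ * s) • Ybar s := by
      rw [← intervalIntegral.integral_smul]
      apply intervalIntegral.integral_congr
      intro s _
      exact smul_comm (Real.exp (γ * s)) γ (Ybar s)
    rw [this]
    rw [smul_add, smul_add, smul_comm γ]
    abel
  have hYeq : Y = fun t => Real.exp (-γ * t) • W t := funext hYW
  have hWderiv : ∀ t, HasDerivAt W (Real.exp (γ * t) • g t) t := by
    intro t
    have : HasDerivAt (fun u => ∫ s in (0:ℝ)..u, Real.exp (γ * s) • g s)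
        (Real.exp (γ * t) • g t) t :=
      intervalIntegral.integral_hasDerivAt_right (hegcont.intervalIntegrable 0 t)
        (hegcont.stronglyMeasurableAtFilter _ _) hegcont.continuousAt
    simpa [hWdef] using this.const_add (Y 0)
  have hYderiv : ∀ t, HasDerivAt Y (y' t + γ • (Ybar t - Y t)) t := by
    intro t
    have he : HasDerivAt (fun u => Real.exp (-γ * u)) (-γ * Real.exp (-γ * t)) t := by
      have := ((hasDerivAt_id t).const_mul (-γ)).exp
      simpa [mul_comm] using this
    have h : HasDerivAt (fun u => Real.exp (-γ * u) • W u)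
        (Real.exp (-γ * t) • Real.exp (γ * t) • g t + (-γ * Real.exp (-γ * t)) • W t) t :=
      he.smul (hWderiv t)
    rw [← hYeq] at h
    have : Real.exp (-γ * t) • Real.exp (γ * t) • g t + (-γ * Real.exp (-γ * t)) • W t
        = y' t + γ • (Ybar t - Y t) := by
      rw [smul_smul, ← Real.exp_add]
      have h1 : -γ * t + γ * t = 0 := by ring
      rw [h1, Real.exp_zero, one_smul, hg, hYW t]
      simp only [smul_sub, smul_smul]
      module
    rw [this] at h
    exact h
  have hYcont : Continuous Y := by
    rw [hYeq]
    exact Continuous.smul (by fun_prop : Continuous fun t : ℝ => Real.exp (-γ * t))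
      ((continuous_const.add (intervalIntegral.continuous_primitive
        (fun a b => hegcont.intervalIntegrable a b) 0)))
  intro t ht
  have hint : ∀ a b : ℝ, IntervalIntegrable (fun s => y' s + γ • (Ybar s - Y s)) volume a b :=
    fun a b => (hy'.add ((hYbar.sub hYcont).const_smul γ)).intervalIntegrable a b
  have hFTC : (∫ s in (0:ℝ)..t, (y' s + γ • (Ybar s - Y s))) = Y t - Y 0 :=
    intervalIntegral.integral_eq_sub_of_hasDerivAt (fun s _ => hYderiv s) (hint 0 t)
  have hFTCy : (∫ s in (0:ℝ)..t, y' s) = y t - y 0 :=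
    intervalIntegral.integral_eq_sub_of_hasDerivAt (fun s _ => hy s)
      (hy'.intervalIntegrable 0 t)
  rw [intervalIntegral.integral_add (f := fun s => y' s) (g := fun s => γ • (Ybar s - Y s))
      (hy'.intervalIntegrable 0 t)
      (((hYbar.sub hYcont).const_smul γ).intervalIntegrable 0 t),
    hFTCy, intervalIntegral.integral_smul] at hFTC
  have := hFTC.symm
  abel_nf at this ⊢
  rw [← this]
  abel
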